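/- Let A be an element of a unital C*-algebra 𝔄 and λ ∈ ℂ. There exists a state ω on 𝔄 that is an eigenstate of A with eigenvalue λ if and only if the unit 1 does not belong to the norm-closure in 𝔄 of the set {B(A − λ·1) : B ∈ 𝔄}. -/

import Mathlib

variable {𝔄 : Type*} [CStarAlgebra 𝔄]

/-- A state on a unital C*-algebra `𝔄`: a continuous linear functional `ω : 𝔄 → ℂ`
which is normalized (`ω 1 = 1`) and positive (`ω (a* a)` is a nonnegative real number). -/
def IsState (ω : 𝔄 → ℂ) : Prop :=
  Continuous ω ∧ IsLinearMap ℂ ω ∧ ω 1 = 1 ∧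
    ∀ a : 𝔄, ∃ r : ℝ, 0 ≤ r ∧ ω (star a * a) = (r : ℂ)

/-- `ω` is an eigenstate of `A` with eigenvalue `l` if `ω (B * A) = l * ω B` for all `B`. -/
def IsEigenstate (ω : 𝔄 → ℂ) (A : 𝔄) (l : ℂ) : Prop :=
  ∀ B : 𝔄, ω (B * A) = l * ω B

lemma my_pos_aux (f : 𝔄 →ₗ[ℂ] ℂ) (hbound : ∀ a : 𝔄, ‖f a‖ ≤ ‖a‖) (hone : f 1 = 1)
    (a : 𝔄) : ∃ r : ℝ, 0 ≤ r ∧ f (star a * a) = (r : ℂ) := by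
  letI : PartialOrder 𝔄 := CStarAlgebra.spectralOrder 𝔄
  haveI : StarOrderedRing 𝔄 := CStarAlgebra.spectralOrderedRing 𝔄
  haveI : Nontrivial 𝔄 := by
    refine nontrivial_of_ne 1 0 fun h => ?_
    apply one_ne_zero (α := ℂ)
    rw [← hone, h, map_zero]
  set b := star a * a with hb_def
  have hb : IsSelfAdjoint b := IsSelfAdjoint.star_mul_self a
  have hbpos : (0 : 𝔄) ≤ b := star_mul_self_nonneg a
  -- step A : imaginary part of f b is zero
  have key : ∀ t : ℝ, ((f b).im + t) ^ 2 ≤ ‖b‖ ^ 2 + t ^ 2 := by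
    intro t
    have hstar : star (b + (Complex.I * t) • (1:𝔄)) * (b + (Complex.I * t) • 1)
        = b * b + ((t : ℂ) ^ 2) • 1 := by
      have h1 : star (b + (Complex.I * t) • (1:𝔄)) = b - (Complex.I * t) • 1 := by
        simp [star_smul, hb.star_eq, Complex.ext_iff, sub_eq_add_neg, ← neg_smul]
      rw [h1]
      simp only [mul_add, sub_mul, smul_mul_assoc, mul_smul_comm, one_mul, mul_one, smul_smul]
      match_scalars
      · ring
      · ring
      · linear_combination (-(t:ℂ)^2) * Complex.I_sq
    set c : 𝔄 := b + (Complex.I * t) • 1 with hc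
    have hnorm : ‖c‖ ^ 2 ≤ ‖b‖ ^ 2 + t ^ 2 := by
      have := CStarRing.norm_star_mul_self (x := c)
      rw [hstar] at this
      calc ‖c‖ ^ 2 = ‖c‖ * ‖c‖ := sq ‖c‖
        _ = ‖b * b + ((t : ℂ) ^ 2) • 1‖ := this.symm
        _ ≤ ‖b * b‖ + ‖((t : ℂ) ^ 2) • 1‖ := norm_add_le _ _
        _ ≤ ‖b‖ * ‖b‖ + t ^ 2 := by
            gcongr
            · exact norm_mul_le _ _
            · rw [norm_smul, norm_one, mul_one]
              simp [← Complex.ofReal_pow]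
        _ = ‖b‖ ^ 2 + t ^ 2 := by ring
    have hfc : f c = f b + Complex.I * t := by
      simp [hc, map_add, map_smul, hone, smul_eq_mul]
    have him : |(f c).im| ≤ ‖f c‖ := Complex.abs_im_le_norm _
    have h2 : (f c).im = (f b).im + t := by
      rw [hfc]; simp
    calc ((f b).im + t) ^ 2 = |(f c).im| ^ 2 := by rw [h2, sq_abs]
      _ ≤ ‖f c‖ ^ 2 := by gcongr
      _ ≤ ‖c‖ ^ 2 := by gcongr; exact hbound c
      _ ≤ ‖b‖ ^ 2 + t ^ 2 := hnorm
  have key2 : ∀ t : ℝ, 2 * (f b).im * t ≤ ‖b‖ ^ 2 := fun t => by nlinarith [key t]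
  have him0 : (f b).im = 0 := by
    by_contra h
    have h4 : 2 * (f b).im * ((‖b‖ ^ 2 + 1) / (2 * (f b).im)) = ‖b‖ ^ 2 + 1 := by
      field_simp
    linarith [key2 ((‖b‖ ^ 2 + 1) / (2 * (f b).im))]
  -- step B : real part nonneg
  set n : ℝ := ‖b‖ with hn
  have hble : b ≤ algebraMap ℝ 𝔄 n := IsSelfAdjoint.le_algebraMap_norm_self hb
  have hsub_nonneg : (0 : 𝔄) ≤ algebraMap ℝ 𝔄 n - b := sub_nonneg.mpr hble
  have hsub_le : ‖algebraMap ℝ 𝔄 n - b‖ ≤ n := by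
    rw [CStarAlgebra.norm_le_iff_le_algebraMap _ (norm_nonneg b) hsub_nonneg]
    simpa [← hn] using hbpos
  have halg : (algebraMap ℝ 𝔄 n : 𝔄) = (n : ℂ) • 1 := by
    rw [Algebra.algebraMap_eq_smul_one]
    norm_num [← Complex.coe_smul]
  have hfb : f (algebraMap ℝ 𝔄 n - b) = (n : ℂ) - f b := by
    rw [map_sub, halg, map_smul, hone, smul_eq_mul, mul_one]
  have hre : 0 ≤ (f b).re := by
    have h1 : ‖f (algebraMap ℝ 𝔄 n - b)‖ ≤ n := le_trans (hbound _) hsub_le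
    rw [hfb] at h1
    have h2 : |((n : ℂ) - f b).re| ≤ ‖(n : ℂ) - f b‖ := Complex.abs_re_le_norm _
    simp only [Complex.sub_re, Complex.ofReal_re] at h2
    have := abs_le.mp (le_trans h2 h1)
    linarith [this.2]
  exact ⟨(f b).re, hre, by rw [Complex.ext_iff]; simp [him0]⟩

/-- There exists an eigenstate of `A` with eigenvalue `l` iff the unit does not belong
to the norm-closure of `{B (A - l•1) : B ∈ 𝔄}`. -/
theorem exists_eigenstate_iff_one_not_mem_closure (A : 𝔄) (l : ℂ) :
    (∃ ω : 𝔄 → ℂ, IsState ω ∧ IsEigenstate ω A l) ↔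
      (1 : 𝔄) ∉ closure {x : 𝔄 | ∃ B : 𝔄, x = B * (A - l • (1 : 𝔄))} := by
  constructor
  · rintro ⟨ω, ⟨hc, hlin, hone, -⟩, heig⟩ hmem
    have hker : closure {x : 𝔄 | ∃ B : 𝔄, x = B * (A - l • (1 : 𝔄))} ⊆ ω ⁻¹' {0} := by
      apply closure_minimal _ (isClosed_singleton.preimage hc)
      rintro x ⟨B, rfl⟩
      have hx : B * (A - l • 1) = B * A - l • B := by
        rw [mul_sub, mul_smul_comm, mul_one]
      simp only [Set.mem_preimage, Set.mem_singleton_iff, hx]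
      rw [hlin.map_sub, hlin.map_smul, heig B]
      simp [smul_eq_mul]
    have : ω 1 = 0 := by simpa using hker hmem
    rw [hone] at this
    exact one_ne_zero this
  · intro h
    set S : Set 𝔄 := {x : 𝔄 | ∃ B : 𝔄, x = B * (A - l • (1 : 𝔄))} with hS
    set p : Submodule ℂ 𝔄 :=
      (LinearMap.range (LinearMap.mulRight ℂ (A - l • (1 : 𝔄)))).topologicalClosure with hp
    have hSet : S = (LinearMap.range (LinearMap.mulRight ℂ (A - l • (1 : 𝔄))) : Set 𝔄) := by
      ext x
      simp [hS, LinearMap.mem_range, eq_comm]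
    have hpc : (p : Set 𝔄) = closure S := by
      rw [hSet, hp]
      rfl
    have h1p : (1 : 𝔄) ∉ p := by
      rw [← SetLike.mem_coe, hpc]
      exact h
    have hmulmem : ∀ (u : 𝔄) {x : 𝔄}, x ∈ p → u * x ∈ p := by
      intro u x hx
      rw [← SetLike.mem_coe, hpc] at hx ⊢
      have hcont : Continuous (fun y : 𝔄 => u * y) := continuous_const.mul continuous_id
      have himg : (fun y : 𝔄 => u * y) '' S ⊆ S := by
        rintro _ ⟨y, ⟨B, rfl⟩, rfl⟩
        exact ⟨u * B, (mul_assoc u B _).symm⟩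
      have h1 : u * x ∈ closure ((fun y : 𝔄 => u * y) '' S) :=
        image_closure_subset_closure_image hcont ⟨x, hx, rfl⟩
      exact closure_mono himg h1
    have hdist : ∀ x ∈ p, (1 : ℝ) ≤ ‖1 - x‖ := by
      intro x hx
      by_contra hlt
      push_neg at hlt
      have hx' : ‖(1 : 𝔄) - x‖ < 1 := hlt
      set u : 𝔄ˣ := Units.oneSub (1 - x) hx' with hu
      have hux : (u : 𝔄) = x := by
        simp [hu, Units.oneSub]
      have h1m : (1 : 𝔄) ∈ p := by
        have := hmulmem (↑u⁻¹) hx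
        rwa [← hux, u.inv_mul] at this
      exact h1p h1m
    have h10 : (1 : 𝔄) ≠ 0 := by
      intro h10
      apply h
      rw [h10]
      exact subset_closure ⟨0, by simp⟩
    haveI : Nontrivial 𝔄 := nontrivial_of_ne 1 0 h10
    haveI hclosed : IsClosed (p : Set 𝔄) := Submodule.isClosed_topologicalClosure _
    have hnorm1 : ‖(Submodule.Quotient.mk 1 : 𝔄 ⧸ p)‖ = 1 := by
      apply le_antisymm
      · simpa using Submodule.Quotient.norm_mk_le p 1
      · refine le_of_forall_pos_le_add fun ε hε => ?_
        obtain ⟨m, hm, hmlt⟩ :=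
          Submodule.Quotient.norm_mk_lt (Submodule.Quotient.mk 1 : 𝔄 ⧸ p) hε
        have : (1 : 𝔄) - m ∈ p := by
          rw [← neg_mem_iff]
          simpa [neg_sub] using (Submodule.Quotient.eq p).mp hm
        have h1 : (1 : ℝ) ≤ ‖(1 : 𝔄) - ((1 : 𝔄) - m)‖ := hdist _ this
        simp only [sub_sub_cancel] at h1
        linarith
    have hne : (Submodule.Quotient.mk 1 : 𝔄 ⧸ p) ≠ 0 := by
      intro h0
      rw [h0, norm_zero] at hnorm1
      exact one_ne_zero hnorm1.symm
    obtain ⟨g, hg1, hg2⟩ := exists_dual_vector ℂ (Submodule.Quotient.mk 1 : 𝔄 ⧸ p) (by rw [hnorm1]; exact one_ne_zero)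
    set F : 𝔄 →ₗ[ℂ] ℂ := g.toLinearMap.comp p.mkQ with hF
    have hFbound : ∀ a : 𝔄, ‖F a‖ ≤ ‖a‖ := by
      intro a
      calc ‖F a‖ = ‖g (Submodule.Quotient.mk a)‖ := rfl
        _ ≤ ‖g‖ * ‖(Submodule.Quotient.mk a : 𝔄 ⧸ p)‖ := g.le_opNorm _
        _ ≤ ‖a‖ := by
            rw [hg1, one_mul]
            exact Submodule.Quotient.norm_mk_le p a
    have hF1 : F 1 = 1 := by
      have : F 1 = g (Submodule.Quotient.mk 1) := rfl
      rw [this, hg2, hnorm1]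
      norm_num
    have hFzero : ∀ x ∈ p, F x = 0 := by
      intro x hx
      have : (Submodule.Quotient.mk x : 𝔄 ⧸ p) = 0 := (Submodule.Quotient.mk_eq_zero p).mpr hx
      calc F x = g (Submodule.Quotient.mk x) := rfl
        _ = g 0 := by rw [this]
        _ = 0 := map_zero g
    have hFcont : Continuous F := (F.mkContinuous 1 (fun a => by simpa using hFbound a)).continuous
    refine ⟨F, ⟨hFcont, ⟨F.map_add, F.map_smul⟩, hF1, my_pos_aux F hFbound hF1⟩, ?_⟩
    intro B
    have hmem : B * (A - l • (1 : 𝔄)) ∈ p := by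
      rw [← SetLike.mem_coe, hpc]
      exact subset_closure ⟨B, rfl⟩
    have h0 : F (B * (A - l • (1 : 𝔄))) = 0 := hFzero _ hmem
    have hx : B * (A - l • (1 : 𝔄)) = B * A - l • B := by
      rw [mul_sub, mul_smul_comm, mul_one]
    rw [hx, map_sub, map_smul, smul_eq_mul, sub_eq_zero] at h0
    exact h0
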